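/- arXiv:math/0206160 — 2 statements merged into one kernel-verified Lean document; each statement's English description precedes it below -/
import Mathlib

section
/- Let IP_∞ be an invariant probability measure for the environment process (T^{X_n}ω). For k ≤ 0 write IP_∞^{k,≪} for the absolutely continuous part of IP_∞ restricted to S_k relative to IP restricted to S_k, and define IP_∞^{∞,≪}(A) = inf_{j≤k} IP_∞^{j,≪}(A) for A ∈ S_k. If IP_∞^{∞,≪}(Ω) > 0, then the normalized measure \hat{IP}_∞ = IP_∞^{∞,≪}(Ω)^{-1} IP_∞^{∞,≪} is an invariant probability measure for the environment process, and it is absolutely continuous with respect to IP on every half-space sigma-field S_k, k ≤ 0. -/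
open MeasureTheory Filter Set
open scoped ENNReal

noncomputable section

abbrev Zd (d : ℕ) := Fin d → ℤ
abbrev Env (d : ℕ) := Zd d → Zd d → ℝ
abbrev Traj (d : ℕ) := ℕ → Zd d

/-- shift of the environment by `k`: `(T^k ω) x e = ω (k+x) e`. -/
def shiftE {d : ℕ} (k : Zd d) (ω : Env d) : Env d := fun x e => ω (k + x) e

/-- the sup-norm ball of radius `M` in `ℤ^d`, the set of admissible jumps. -/
def box (d M : ℕ) : Finset (Zd d) := Finset.Icc (fun _ => -(M : ℤ)) (fun _ => (M : ℤ))

/-- scalar product `x · ℓ`. -/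
def dotl {d : ℕ} (x : Zd d) (ℓ : Fin d → ℝ) : ℝ := ∑ i, (x i : ℝ) * ℓ i

/-- the local drift in direction `ℓ`: `D(ω)·ℓ`. -/
def driftl {d : ℕ} (M : ℕ) (ℓ : Fin d → ℝ) (ω : Env d) : ℝ :=
  ∑ e ∈ box d M, dotl e ℓ * ω 0 e

/-- `μ` is the law of the quenched walk in environment `ω` started at `x0`:
a probability measure with `X_0 = x0` a.s., and the Markov property with
transition probabilities `ω i (j - i)` from `i` to `j`. -/
def IsWalk {d : ℕ} (μ : Measure (Traj d)) (ω : Env d) (x0 : Zd d) : Prop :=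
  IsProbabilityMeasure μ ∧ μ {w | w 0 = x0} = 1 ∧
  ∀ (n : ℕ) (A : Set (Traj d)), MeasurableSet A →
    (∀ w w' : Traj d, (∀ m ≤ n, w m = w' m) → (w ∈ A ↔ w' ∈ A)) →
    ∀ i j : Zd d,
      μ (A ∩ {w | w n = i ∧ w (n + 1) = j}) =
        ENNReal.ofReal (ω i (j - i)) * μ (A ∩ {w | w n = i})

/-- a nice environment of range `M`: nonnegative transition probabilities of
total mass one, supported on jumps of sup-norm at most `M`. -/
def GoodEnv {d : ℕ} (M : ℕ) (ω : Env d) : Prop :=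
  (∀ x e, 0 ≤ ω x e) ∧ (∀ x, ∑ e ∈ box d M, ω x e = 1) ∧
  (∀ x e, e ∉ box d M → ω x e = 0)

/-- `U` is `M`-connected: there is a path of range `M` through all its points. -/
def MConn {d : ℕ} (M : ℕ) (U : Finset (Zd d)) : Prop :=
  ∃ (n : ℕ) (p : ℕ → Zd d), (∀ i ≤ n, p i ∈ U) ∧
    (∀ i < n, p (i + 1) - p i ∈ box d M) ∧ (∀ x ∈ U, ∃ i ≤ n, p i = x)

/-- `E^ω_{x0}[Σ_{j=0}^{T_U} 1(X_j = x)]`, the expected number of visits to `x`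
before exiting `U`. -/
def exitGreen {d : ℕ} (μ : Measure (Traj d)) (U : Set (Zd d)) (x : Zd d) : ℝ≥0∞ :=
  ∑' j : ℕ, μ {w | w j = x ∧ ∀ m < j, w m ∈ U}

/-- Kalikow's condition in direction `ℓ` with constant `ε`, for the annealed walk
with environment distribution `IP` and quenched laws `P ω` (started at `0`). -/
def KalikowCond {d : ℕ} (IP : Measure (Env d)) (P : Env d → Measure (Traj d))
    (M : ℕ) (ℓ : Fin d → ℝ) (ε : ℝ) : Prop :=
  0 < ε ∧ ∀ U : Finset (Zd d), (0 : Zd d) ∈ U → MConn M U → ∀ x ∈ U,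
    ε * ∫ ω, (exitGreen (P ω) (↑U) x).toReal ∂IP ≤
      ∫ ω, driftl M ℓ (shiftE x ω) * (exitGreen (P ω) (↑U) x).toReal ∂IP

/-- shift invariance of the environment measure. -/
def ShiftInv {d : ℕ} (IP : Measure (Env d)) : Prop :=
  ∀ k : Zd d, Measure.map (shiftE k) IP = IP

/-- ergodicity of the environment measure under the shifts. -/
def ErgEnv {d : ℕ} (IP : Measure (Env d)) : Prop :=
  ShiftInv IP ∧ ∀ S : Set (Env d), MeasurableSet S →
    (∀ k : Zd d, shiftE k ⁻¹' S = S) → IP S = 0 ∨ IP S = 1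

/-- invariance of a measure for the environment process viewed from the particle,
whose kernel is `π(ω, A) = Σ_{|e| ≤ M} π_{0e}(ω) 1_A(T^e ω)`. -/
def EnvInvariant {d : ℕ} (M : ℕ) (IPinf : Measure (Env d)) : Prop :=
  ∀ A : Set (Env d), MeasurableSet A →
    ∫⁻ ω, ∑ e ∈ box d M, ENNReal.ofReal (ω 0 e) * A.indicator 1 (shiftE e ω) ∂IPinf
      = IPinf A

/-- weak ellipticity in direction `ℓ`: a.s. `π_{0j} > 0` for all unit vectors `j`
with `j·ℓ ≥ 0`. -/
def WeakElliptic {d : ℕ} (IP : Measure (Env d)) (ℓ : Fin d → ℝ) : Prop :=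
  ∀ᵐ ω ∂IP, ∀ e : Zd d, (∑ i, (e i) * (e i)) = 1 → 0 ≤ dotl e ℓ → 0 < ω 0 e

/-- the half-space σ-field `S_k = σ(ω_x : x·ℓ ≥ k)`. -/
def Sfield {d : ℕ} (ℓ : Fin d → ℝ) (k : ℝ) : MeasurableSpace (Env d) :=
  ⨆ x ∈ {x : Zd d | k ≤ dotl x ℓ}, MeasurableSpace.comap (fun ω : Env d => ω x) inferInstance

lemma Sfield_le {d : ℕ} (ℓ : Fin d → ℝ) (k : ℝ) :
    Sfield ℓ k ≤ (inferInstance : MeasurableSpace (Env d)) := by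
  apply iSup₂_le
  intro x _
  exact (measurable_pi_apply x).comap_le

/-- the absolutely continuous part `IP_∞^{k,≪}` of `IP_∞` restricted to the
half-space σ-field `S_k`, relative to `IP` restricted to `S_k`. -/
def acPartOn {d : ℕ} (ℓ : Fin d → ℝ) (k : ℝ) (IP IPinf : Measure (Env d)) :
    @Measure (Env d) (Sfield ℓ k) :=
  (IP.trim (Sfield_le ℓ k)).withDensity
    ((IPinf.trim (Sfield_le ℓ k)).rnDeriv (IP.trim (Sfield_le ℓ k)))

namespace ACAux

/-- the constant `c = M * Σ|ℓ i|`, a bound for `|e·ℓ|` over the box. -/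
def cb (d M : ℕ) (ℓ : Fin d → ℝ) : ℝ := (M : ℝ) * ∑ i, |ℓ i|

lemma cb_nonneg (d M : ℕ) (ℓ : Fin d → ℝ) : 0 ≤ cb d M ℓ := by
  apply mul_nonneg (by positivity)
  exact Finset.sum_nonneg fun i _ => abs_nonneg _

lemma dotl_add {d : ℕ} (x y : Zd d) (ℓ : Fin d → ℝ) :
    dotl (x + y) ℓ = dotl x ℓ + dotl y ℓ := by
  simp [dotl, Pi.add_apply, add_mul, Finset.sum_add_distrib]

lemma dotl_zero {d : ℕ} (ℓ : Fin d → ℝ) : dotl (0 : Zd d) ℓ = 0 := by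
  simp [dotl]

lemma abs_dotl_le {d M : ℕ} {e : Zd d} (ℓ : Fin d → ℝ) (he : e ∈ box d M) :
    |dotl e ℓ| ≤ cb d M ℓ := by
  have hb : ∀ i, |(e i : ℝ)| ≤ (M : ℝ) := by
    intro i
    rw [box, Finset.mem_Icc] at he
    have h1 : -(M : ℤ) ≤ e i := he.1 i
    have h2 : e i ≤ (M : ℤ) := he.2 i
    rw [abs_le]
    constructor
    · exact_mod_cast h1
    · exact_mod_cast h2
  calc |dotl e ℓ| ≤ ∑ i, |(e i : ℝ) * ℓ i| := Finset.abs_sum_le_sum_abs _ _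
    _ ≤ ∑ i, (M : ℝ) * |ℓ i| := by
        apply Finset.sum_le_sum
        intro i _
        rw [abs_mul]
        exact mul_le_mul_of_nonneg_right (hb i) (abs_nonneg _)
    _ = cb d M ℓ := by rw [cb, Finset.mul_sum]

lemma neg_cb_le_dotl {d M : ℕ} {e : Zd d} (ℓ : Fin d → ℝ) (he : e ∈ box d M) :
    -cb d M ℓ ≤ dotl e ℓ := neg_le_of_abs_le (abs_dotl_le ℓ he)

lemma dotl_neg {d : ℕ} (e : Zd d) (ℓ : Fin d → ℝ) : dotl (-e) ℓ = -dotl e ℓ := by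
  simp [dotl, Finset.sum_neg_distrib, neg_mul]

lemma neg_mem_box {d M : ℕ} {e : Zd d} (he : e ∈ box d M) : -e ∈ box d M := by
  rw [box, Finset.mem_Icc] at he ⊢
  constructor
  · intro i; simpa using neg_le_neg (he.2 i)
  · intro i; simpa using neg_le_neg (he.1 i)

lemma Sfield_mono {d : ℕ} (ℓ : Fin d → ℝ) {a b : ℝ} (h : a ≤ b) :
    Sfield ℓ b ≤ Sfield ℓ a := by
  apply iSup₂_le
  intro x hx
  exact le_iSup₂ (f := fun (x : Zd d) (_ : x ∈ {x : Zd d | a ≤ dotl x ℓ}) =>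
    MeasurableSpace.comap (fun ω : Env d => ω x) inferInstance) x (le_trans h hx)

lemma shiftE_shiftE {d : ℕ} (a b : Zd d) (ω : Env d) :
    shiftE a (shiftE b ω) = shiftE (b + a) ω := by
  funext x e; simp [shiftE, add_assoc]

lemma shiftE_zero {d : ℕ} (ω : Env d) : shiftE (0 : Zd d) ω = ω := by
  funext x e; simp [shiftE]

lemma measurable_shiftE_ambient {d : ℕ} (e : Zd d) : Measurable (shiftE e) := by
  apply measurable_pi_lambda
  intro x
  exact measurable_pi_apply (e + x)

lemma measurable_eval0 {d : ℕ} (ℓ : Fin d → ℝ) {j : ℝ} (hj : j ≤ 0) :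
    Measurable[Sfield ℓ j] fun ω : Env d => ω 0 := by
  rw [measurable_iff_comap_le]
  exact le_iSup₂ (f := fun (x : Zd d) (_ : x ∈ {x : Zd d | j ≤ dotl x ℓ}) =>
    MeasurableSpace.comap (fun ω : Env d => ω x) inferInstance) 0
    (by simp [Set.mem_setOf_eq, dotl_zero]; exact hj)

lemma measurable_shiftE_tr {d M : ℕ} (ℓ : Fin d → ℝ) {e : Zd d}
    (he : -cb d M ℓ ≤ dotl e ℓ) {a b : ℝ} (hab : a + cb d M ℓ ≤ b) :
    @Measurable _ _ (Sfield ℓ a) (Sfield ℓ b) (shiftE e) := by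
  rw [measurable_iff_comap_le]
  unfold Sfield
  rw [MeasurableSpace.comap_iSup]
  apply iSup_le
  intro x
  rw [MeasurableSpace.comap_iSup]
  apply iSup_le
  intro hx
  rw [MeasurableSpace.comap_comp]
  have : ((fun ω : Env d => ω x) ∘ shiftE e) = fun ω : Env d => ω (e + x) := rfl
  rw [this]
  refine le_iSup₂ (f := fun (y : Zd d) (_ : y ∈ {y : Zd d | a ≤ dotl y ℓ}) =>
    MeasurableSpace.comap (fun ω : Env d => ω y) inferInstance) (e + x) ?_
  have hx' : b ≤ dotl x ℓ := hx
  simp only [Set.mem_setOf_eq, dotl_add]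
  linarith

end ACAux
namespace ACAux

/-- the kernel integrand of the environment process. -/
def Lfun {d : ℕ} (M : ℕ) (A : Set (Env d)) (ω : Env d) : ℝ≥0∞ :=
  ∑ e ∈ box d M, ENNReal.ofReal (ω 0 e) * A.indicator 1 (shiftE e ω)

lemma measurable_g {d : ℕ} (ℓ : Fin d → ℝ) (e : Zd d) {j : ℝ} (hj : j ≤ 0) :
    Measurable[Sfield ℓ j] fun ω : Env d => ENNReal.ofReal (ω 0 e) :=
  ENNReal.measurable_ofReal.comp ((measurable_pi_apply e).comp (measurable_eval0 ℓ hj))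

lemma Lfun_meas {d M : ℕ} (ℓ : Fin d → ℝ) {j b : ℝ} (hj : j ≤ 0)
    (hab : j + cb d M ℓ ≤ b) {A : Set (Env d)} (hA : MeasurableSet[Sfield ℓ b] A) :
    Measurable[Sfield ℓ j] (Lfun M A) := by
  apply Finset.measurable_sum
  intro e he
  exact (measurable_g ℓ e hj).mul
    ((measurable_const.indicator hA).comp (measurable_shiftE_tr ℓ (neg_cb_le_dotl ℓ he) hab))

lemma Lfun_meas_ambient {d M : ℕ} {A : Set (Env d)} (hA : MeasurableSet A) :
    Measurable (Lfun M A) := by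
  apply Finset.measurable_sum
  intro e _
  exact (ENNReal.measurable_ofReal.comp ((measurable_pi_apply e).comp
    (measurable_pi_apply 0))).mul
    ((measurable_const.indicator hA).comp (measurable_shiftE_ambient e))

lemma Lfun_mono {d M : ℕ} {A B : Set (Env d)} (h : A ⊆ B) (ω : Env d) :
    Lfun M A ω ≤ Lfun M B ω := by
  apply Finset.sum_le_sum
  intro e _
  exact mul_le_mul_right (Set.indicator_le_indicator_of_subset h (fun _ => zero_le) _) _

lemma Lfun_le_s {d M : ℕ} {A : Set (Env d)} (ω : Env d) :
    Lfun M A ω ≤ Lfun M Set.univ ω := Lfun_mono (Set.subset_univ A) ω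

lemma IPinf_eq_lintegral_Lfun {d M : ℕ} {IPinf : Measure (Env d)}
    (hinv : EnvInvariant M IPinf) {A : Set (Env d)} (hA : MeasurableSet A) :
    ∫⁻ ω, Lfun M A ω ∂IPinf = IPinf A := hinv A hA

/- ### basic facts about the absolutely continuous parts -/

lemma acPart_le_IPinf {d : ℕ} (ℓ : Fin d → ℝ) (a : ℝ) (IP IPinf : Measure (Env d))
    {A : Set (Env d)} (hA : MeasurableSet[Sfield ℓ a] A) :
    acPartOn ℓ a IP IPinf A ≤ IPinf A := by
  refine le_trans (Measure.le_iff'.mp (Measure.withDensity_rnDeriv_le _ _) A) ?_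
  rw [trim_measurableSet_eq _ hA]

lemma acPart_null {d : ℕ} (ℓ : Fin d → ℝ) (a : ℝ) (IP IPinf : Measure (Env d))
    {A : Set (Env d)} (hA : MeasurableSet[Sfield ℓ a] A) (h0 : IP A = 0) :
    acPartOn ℓ a IP IPinf A = 0 := by
  rw [acPartOn, withDensity_apply _ hA]
  exact setLIntegral_measure_zero _ _ (by rw [trim_measurableSet_eq _ hA]; exact h0)

/-- maximality of the absolutely continuous part. -/
lemma le_acPart {d : ℕ} (ℓ : Fin d → ℝ) (a : ℝ) (IP IPinf : Measure (Env d))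
    [IsFiniteMeasure IP] [IsFiniteMeasure IPinf]
    (ξ : @Measure (Env d) (Sfield ℓ a))
    (h1 : ∀ B : Set (Env d), MeasurableSet[Sfield ℓ a] B → ξ B ≤ IPinf B)
    (h2 : ∀ B : Set (Env d), MeasurableSet[Sfield ℓ a] B → IP B = 0 → ξ B = 0)
    {A : Set (Env d)} (hA : MeasurableSet[Sfield ℓ a] A) :
    ξ A ≤ acPartOn ℓ a IP IPinf A := by
  haveI := isFiniteMeasure_trim (Sfield_le ℓ a) (μ := IP)
  haveI := isFiniteMeasure_trim (Sfield_le ℓ a) (μ := IPinf)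
  haveI : (IPinf.trim (Sfield_le ℓ a)).HaveLebesgueDecomposition (IP.trim (Sfield_le ℓ a)) :=
    Measure.haveLebesgueDecomposition_of_finiteMeasure
  obtain ⟨S, hS, hσS, hIPS⟩ :=
    Measure.mutuallySingular_singularPart (IPinf.trim (Sfield_le ℓ a)) (IP.trim (Sfield_le ℓ a))
  -- S : singular part null on S, IP null on Sᶜ
  have hIPSc : IP Sᶜ = 0 := by
    rw [← trim_measurableSet_eq (Sfield_le ℓ a) hS.compl]; exact hIPS
  have hdec := Measure.haveLebesgueDecomposition_add
    (IPinf.trim (Sfield_le ℓ a)) (IP.trim (Sfield_le ℓ a))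
  calc ξ A = ξ (A ∩ S) + ξ (A \ S) := (measure_inter_add_diff A hS).symm
    _ = ξ (A ∩ S) := by
        rw [h2 (A \ S) (hA.diff hS) (measure_mono_null (Set.diff_subset_compl A S) hIPSc), add_zero]
    _ ≤ IPinf (A ∩ S) := h1 _ (hA.inter hS)
    _ = (IPinf.trim (Sfield_le ℓ a)) (A ∩ S) := (trim_measurableSet_eq _ (hA.inter hS)).symm
    _ = (IPinf.trim (Sfield_le ℓ a)).singularPart (IP.trim (Sfield_le ℓ a)) (A ∩ S)
        + acPartOn ℓ a IP IPinf (A ∩ S) := by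
          conv_lhs => rw [hdec]
          rw [Measure.add_apply]; rfl
    _ ≤ 0 + acPartOn ℓ a IP IPinf A :=
        add_le_add (measure_mono_null Set.inter_subset_right hσS).le
          (measure_mono Set.inter_subset_left)
    _ = acPartOn ℓ a IP IPinf A := by rw [zero_add]

lemma acPart_mono_level {d : ℕ} (ℓ : Fin d → ℝ) {a b : ℝ} (hab : a ≤ b)
    (IP IPinf : Measure (Env d)) [IsFiniteMeasure IP] [IsFiniteMeasure IPinf]
    {A : Set (Env d)} (hA : MeasurableSet[Sfield ℓ b] A) :
    acPartOn ℓ a IP IPinf A ≤ acPartOn ℓ b IP IPinf A := by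
  have h := le_acPart ℓ b IP IPinf ((acPartOn ℓ a IP IPinf).trim (Sfield_mono ℓ hab))
    (fun B hB => by
      rw [trim_measurableSet_eq _ hB]
      exact acPart_le_IPinf ℓ a IP IPinf (Sfield_mono ℓ hab B hB))
    (fun B hB h0 => by
      rw [trim_measurableSet_eq _ hB]
      exact acPart_null ℓ a IP IPinf (Sfield_mono ℓ hab B hB) h0) hA
  rwa [trim_measurableSet_eq _ hA] at h

end ACAux
namespace ACAux

/-- the kernel operator, mapping measures on `S_a` to measures on `S_b`. -/
def PiTr {d : ℕ} (M : ℕ) (ℓ : Fin d → ℝ) (a b : ℝ) (μ : @Measure (Env d) (Sfield ℓ a)) :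
    @Measure (Env d) (Sfield ℓ b) :=
  ∑ e ∈ box d M, @Measure.map _ _ (Sfield ℓ a) (Sfield ℓ b) (shiftE e)
    (@Measure.withDensity _ (Sfield ℓ a) μ fun ω => ENNReal.ofReal (ω 0 e))

lemma Lfun_rep {d M : ℕ} (A : Set (Env d)) (ω : Env d) :
    Lfun M A ω = ∑ e ∈ box d M,
      ((shiftE e) ⁻¹' A).indicator (fun ω' => ENNReal.ofReal (ω' 0 e)) ω := by
  unfold Lfun
  refine Finset.sum_congr rfl fun e _ => ?_
  by_cases h : shiftE e ω ∈ A
  · rw [Set.indicator_of_mem h, Set.indicator_of_mem (Set.mem_preimage.mpr h)]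
    simp
  · rw [Set.indicator_of_notMem h, mul_zero,
      Set.indicator_of_notMem (s := shiftE e ⁻¹' A) (fun hc => h hc)]

lemma PiTr_apply {d M : ℕ} (ℓ : Fin d → ℝ) {a b : ℝ} (ha : a ≤ 0)
    (hab : a + cb d M ℓ ≤ b) (μ : @Measure (Env d) (Sfield ℓ a))
    {A : Set (Env d)} (hA : MeasurableSet[Sfield ℓ b] A) :
    PiTr M ℓ a b μ A = @lintegral _ (Sfield ℓ a) μ (Lfun M A) := by
  have hpre : ∀ e ∈ box d M, MeasurableSet[Sfield ℓ a] ((shiftE e) ⁻¹' A) :=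
    fun e he => measurable_shiftE_tr ℓ (neg_cb_le_dotl ℓ he) hab hA
  calc PiTr M ℓ a b μ A
      = ∑ e ∈ box d M, (@Measure.map _ _ (Sfield ℓ a) (Sfield ℓ b) (shiftE e)
          (@Measure.withDensity _ (Sfield ℓ a) μ fun ω => ENNReal.ofReal (ω 0 e))) A := by
        rw [PiTr]; exact Measure.finset_sum_apply _ _ _
    _ = ∑ e ∈ box d M, @lintegral _ (Sfield ℓ a) μ
          (((shiftE e) ⁻¹' A).indicator (fun ω' => ENNReal.ofReal (ω' 0 e))) := by
        refine Finset.sum_congr rfl fun e he => ?_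
        rw [@Measure.map_apply _ _ (Sfield ℓ a) (Sfield ℓ b) _ _
            (measurable_shiftE_tr ℓ (neg_cb_le_dotl ℓ he) hab) _ hA,
          @withDensity_apply _ (Sfield ℓ a) _ _ _ (hpre e he),
          ← @lintegral_indicator _ (Sfield ℓ a) _ _ (hpre e he)]
    _ = @lintegral _ (Sfield ℓ a) μ (fun ω => ∑ e ∈ box d M,
          ((shiftE e) ⁻¹' A).indicator (fun ω' => ENNReal.ofReal (ω' 0 e)) ω) := by
        rw [@lintegral_finset_sum _ _ (Sfield ℓ a) μ (box d M)
          (fun e ω => ((shiftE e) ⁻¹' A).indicator (fun ω' => ENNReal.ofReal (ω' 0 e)) ω)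
          (fun e he => Measurable.indicator (measurable_g ℓ e ha) (hpre e he))]
    _ = @lintegral _ (Sfield ℓ a) μ (Lfun M A) := by
        refine congrArg _ ?_
        funext ω
        rw [Lfun_rep]

lemma PiTr_le_IPinf {d M : ℕ} (ℓ : Fin d → ℝ) {a b : ℝ} (ha : a ≤ 0)
    (hab : a + cb d M ℓ ≤ b) (IPinf : Measure (Env d)) (hinv : EnvInvariant M IPinf)
    (μ : @Measure (Env d) (Sfield ℓ a)) (hμ : μ ≤ IPinf.trim (Sfield_le ℓ a))
    {A : Set (Env d)} (hA : MeasurableSet[Sfield ℓ b] A) :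
    PiTr M ℓ a b μ A ≤ IPinf A := by
  rw [PiTr_apply ℓ ha hab μ hA]
  calc @lintegral _ (Sfield ℓ a) μ (Lfun M A)
      ≤ @lintegral _ (Sfield ℓ a) (IPinf.trim (Sfield_le ℓ a)) (Lfun M A) :=
        lintegral_mono' hμ le_rfl
    _ = ∫⁻ ω, Lfun M A ω ∂IPinf := lintegral_trim _ (Lfun_meas ℓ ha hab hA)
    _ = IPinf A := hinv A (Sfield_le ℓ b A hA)

lemma PiTr_acPart_null {d M : ℕ} (ℓ : Fin d → ℝ) {a b : ℝ} (ha : a ≤ 0)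
    (hab : a + cb d M ℓ ≤ b) (IP IPinf : Measure (Env d)) (hsh : ShiftInv IP)
    {A : Set (Env d)} (hA : MeasurableSet[Sfield ℓ b] A) (h0 : IP A = 0) :
    PiTr M ℓ a b (acPartOn ℓ a IP IPinf) A = 0 := by
  rw [PiTr_apply ℓ ha hab _ hA]
  have hAamb : MeasurableSet A := Sfield_le ℓ b A hA
  have hpre : ∀ e ∈ box d M, MeasurableSet[Sfield ℓ a] ((shiftE e) ⁻¹' A) :=
    fun e he => measurable_shiftE_tr ℓ (neg_cb_le_dotl ℓ he) hab hA
  have hprenull : ∀ e ∈ box d M, acPartOn ℓ a IP IPinf ((shiftE e) ⁻¹' A) = 0 := by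
    intro e he
    refine acPart_null ℓ a IP IPinf (hpre e he) ?_
    have := Measure.map_apply (measurable_shiftE_ambient e) hAamb (μ := IP)
    rw [hsh e] at this
    rw [← this, h0]
  have hbad : acPartOn ℓ a IP IPinf {ω | ¬ Lfun M A ω = 0} = 0 := by
    refine measure_mono_null (t := ⋃ e ∈ box d M, (shiftE e) ⁻¹' A) ?_ ?_
    · intro ω hω
      by_contra hc
      apply hω
      refine Finset.sum_eq_zero fun e he => ?_
      have hnm : shiftE e ω ∉ A := fun hm => hc (Set.mem_biUnion he hm)
      rw [Set.indicator_of_notMem hnm, mul_zero]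
    · refine le_antisymm (le_trans (measure_biUnion_finset_le _ _) ?_) zero_le
      rw [Finset.sum_congr rfl hprenull, Finset.sum_const, smul_zero]
  have hae : Lfun M A =ᵐ[acPartOn ℓ a IP IPinf] (fun _ => 0) := ae_iff.mpr hbad
  rw [lintegral_congr_ae hae, lintegral_zero]

lemma PiTr_acPart_le {d M : ℕ} (ℓ : Fin d → ℝ) {a b : ℝ} (ha : a ≤ 0)
    (hab : a + cb d M ℓ ≤ b) (IP IPinf : Measure (Env d))
    [IsFiniteMeasure IP] [IsFiniteMeasure IPinf]
    (hsh : ShiftInv IP) (hinv : EnvInvariant M IPinf)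
    {A : Set (Env d)} (hA : MeasurableSet[Sfield ℓ b] A) :
    PiTr M ℓ a b (acPartOn ℓ a IP IPinf) A ≤ acPartOn ℓ b IP IPinf A := by
  refine le_acPart ℓ b IP IPinf _ ?_ ?_ hA
  · exact fun B hB => PiTr_le_IPinf ℓ ha hab IPinf hinv _
      (Measure.withDensity_rnDeriv_le _ _) hB
  · exact fun B hB h0 => PiTr_acPart_null ℓ ha hab IP IPinf hsh hB h0

end ACAux
namespace ACAux

/-- key lower bound: the deeper a.c. part is dominated by the kernel applied to
the a.c. part at level `a`. -/
lemma acPart_le_lintegral {d M : ℕ} (ℓ : Fin d → ℝ) {a : ℝ} (ha : a ≤ 0)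
    (IP IPinf : Measure (Env d)) [IsFiniteMeasure IP] [IsFiniteMeasure IPinf]
    (hsh : ShiftInv IP) (hinv : EnvInvariant M IPinf)
    {A : Set (Env d)} (hA : MeasurableSet[Sfield ℓ (a + cb d M ℓ)] A) :
    acPartOn ℓ (a - cb d M ℓ) IP IPinf A
      ≤ @lintegral _ (Sfield ℓ a) (acPartOn ℓ a IP IPinf) (Lfun M A) := by
  set c := cb d M ℓ with hc
  have hc0 : 0 ≤ c := cb_nonneg d M ℓ
  haveI := isFiniteMeasure_trim (Sfield_le ℓ a) (μ := IP)
  haveI := isFiniteMeasure_trim (Sfield_le ℓ a) (μ := IPinf)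
  haveI : (IPinf.trim (Sfield_le ℓ a)).HaveLebesgueDecomposition (IP.trim (Sfield_le ℓ a)) :=
    Measure.haveLebesgueDecomposition_of_finiteMeasure
  obtain ⟨S, hS, hσS, hIPS⟩ :=
    Measure.mutuallySingular_singularPart (IPinf.trim (Sfield_le ℓ a)) (IP.trim (Sfield_le ℓ a))
  set N : Set (Env d) := Sᶜ with hNdef
  have hN : MeasurableSet[Sfield ℓ a] N := hS.compl
  have hIPN : IP N = 0 := by
    rw [← trim_measurableSet_eq (Sfield_le ℓ a) hN]; exact hIPS
  have hσNc : (IPinf.trim (Sfield_le ℓ a)).singularPart (IP.trim (Sfield_le ℓ a)) Nᶜ = 0 := by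
    rw [hNdef, compl_compl]; exact hσS
  -- the union of shifted copies of `N`
  set C : Set (Env d) := ⋃ e ∈ box d M, (shiftE (-e)) ⁻¹' N with hCdef
  have hCmeas : MeasurableSet[Sfield ℓ (a - c)] C := by
    refine Finset.measurableSet_biUnion _ fun e he => ?_
    have h1 : -c ≤ dotl (-e) ℓ := by
      rw [dotl_neg]
      have := abs_dotl_le ℓ he
      rw [abs_le] at this
      linarith [this.2]
    exact measurable_shiftE_tr ℓ h1 (by linarith : (a - c) + c ≤ a) hN
  have hNamb : MeasurableSet N := Sfield_le ℓ a N hN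
  have hIPC : IP C = 0 := by
    refine le_antisymm (le_trans (measure_biUnion_finset_le _ _) ?_) zero_le
    have : ∀ e ∈ box d M, IP ((shiftE (-e)) ⁻¹' N) = 0 := by
      intro e _
      have hmap := Measure.map_apply (measurable_shiftE_ambient (-e)) hNamb (μ := IP)
      rw [hsh (-e)] at hmap
      rw [← hmap, hIPN]
    rw [Finset.sum_congr rfl this, Finset.sum_const, smul_zero]
  have hAac : MeasurableSet[Sfield ℓ (a - c)] A :=
    Sfield_mono ℓ (by linarith : a - c ≤ a + c) A hA
  have hAamb : MeasurableSet A := Sfield_le ℓ (a + c) A hA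
  have hdiffamb : MeasurableSet (A \ C) := hAamb.diff (Sfield_le ℓ (a - c) C hCmeas)
  have hdec := Measure.haveLebesgueDecomposition_add
    (IPinf.trim (Sfield_le ℓ a)) (IP.trim (Sfield_le ℓ a))
  -- pointwise bound
  have hpt : ∀ ω, Lfun M (A \ C) ω ≤ Nᶜ.indicator (Lfun M A) ω := by
    intro ω
    by_cases hω : ω ∈ N
    · have h0 : Lfun M (A \ C) ω = 0 := by
        refine Finset.sum_eq_zero fun e he => ?_
        have hmC : shiftE e ω ∈ C := by
          refine Set.mem_biUnion he ?_
          rw [Set.mem_preimage, shiftE_shiftE]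
          have : e + -e = (0 : Zd d) := by abel
          rw [this, shiftE_zero]
          exact hω
        rw [Set.indicator_of_notMem (fun hm => hm.2 hmC), mul_zero]
      rw [h0, Set.indicator_of_notMem (by simpa using hω)]
    · rw [Set.indicator_of_mem (by simpa using hω)]
      exact Lfun_mono Set.diff_subset ω
  have hLfunA : Measurable[Sfield ℓ a] (Lfun M A) := Lfun_meas ℓ ha le_rfl hA
  have hindmeas : Measurable[Sfield ℓ a] (Nᶜ.indicator (Lfun M A)) :=
    hLfunA.indicator hN.compl
  calc acPartOn ℓ (a - c) IP IPinf A
      = acPartOn ℓ (a - c) IP IPinf (A ∩ C) + acPartOn ℓ (a - c) IP IPinf (A \ C) :=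
        (measure_inter_add_diff A hCmeas).symm
    _ = acPartOn ℓ (a - c) IP IPinf (A \ C) := by
        rw [acPart_null ℓ (a - c) IP IPinf (hAac.inter hCmeas)
          (measure_mono_null Set.inter_subset_right hIPC), zero_add]
    _ ≤ IPinf (A \ C) := acPart_le_IPinf ℓ (a - c) IP IPinf (hAac.diff hCmeas)
    _ = ∫⁻ ω, Lfun M (A \ C) ω ∂IPinf := (hinv _ hdiffamb).symm
    _ ≤ ∫⁻ ω, Nᶜ.indicator (Lfun M A) ω ∂IPinf := lintegral_mono hpt
    _ = @lintegral _ (Sfield ℓ a) (IPinf.trim (Sfield_le ℓ a)) (Nᶜ.indicator (Lfun M A)) :=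
        (lintegral_trim _ hindmeas).symm
    _ = @lintegral _ (Sfield ℓ a)
          ((IPinf.trim (Sfield_le ℓ a)).singularPart (IP.trim (Sfield_le ℓ a)))
          (Nᶜ.indicator (Lfun M A))
        + @lintegral _ (Sfield ℓ a) (acPartOn ℓ a IP IPinf) (Nᶜ.indicator (Lfun M A)) := by
        conv_lhs => rw [hdec]
        exact lintegral_add_measure _ _ _
    _ = @lintegral _ (Sfield ℓ a) (acPartOn ℓ a IP IPinf) (Nᶜ.indicator (Lfun M A)) := by
        rw [@lintegral_indicator _ (Sfield ℓ a) _ _ hN.compl,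
          setLIntegral_measure_zero _ _ hσNc, zero_add]
    _ ≤ @lintegral _ (Sfield ℓ a) (acPartOn ℓ a IP IPinf) (Lfun M A) :=
        lintegral_mono (Set.indicator_le_self _ _)

end ACAux
namespace ACAux

/-- the "gap" measure `δ_a = ρ_a - ν` on `S_a`. -/
def delta {d : ℕ} (ℓ : Fin d → ℝ) (IP IPinf ν : Measure (Env d)) (a : ℝ) :
    @Measure (Env d) (Sfield ℓ a) :=
  acPartOn ℓ a IP IPinf - ν.trim (Sfield_le ℓ a)

set_option maxHeartbeats 1000000 in
lemma trim_le_acPart {d : ℕ} (ℓ : Fin d → ℝ) (IP IPinf ν : Measure (Env d))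
    (hν : ∀ k : ℤ, k ≤ 0 → ∀ A : Set (Env d), MeasurableSet[Sfield ℓ (k : ℝ)] A →
      ν A = ⨅ j : {j : ℤ // j ≤ k}, acPartOn ℓ (j : ℝ) IP IPinf A)
    (a : ℤ) (ha : a ≤ 0) :
    ν.trim (Sfield_le ℓ (a : ℝ)) ≤ acPartOn ℓ (a : ℝ) IP IPinf := by
  refine Measure.le_iff.mpr fun B hB => ?_
  rw [trim_measurableSet_eq _ hB, hν a ha B hB]
  have h2 := iInf_le (fun j : {j : ℤ // j ≤ a} => acPartOn ℓ (j : ℝ) IP IPinf B) ⟨a, le_rfl⟩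
  simp only [Subtype.coe_mk] at h2
  exact h2

lemma key_le {d M : ℕ} (ℓ : Fin d → ℝ) (IP : Measure (Env d)) [IsProbabilityMeasure IP]
    (hsh : ShiftInv IP) (IPinf : Measure (Env d)) [IsProbabilityMeasure IPinf]
    (hinv : EnvInvariant M IPinf) (ν : Measure (Env d)) [IsFiniteMeasure ν]
    (hν : ∀ k : ℤ, k ≤ 0 → ∀ A : Set (Env d), MeasurableSet[Sfield ℓ (k : ℝ)] A →
      ν A = ⨅ j : {j : ℤ // j ≤ k}, acPartOn ℓ (j : ℝ) IP IPinf A)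
    (k : ℤ) (hk : k ≤ 0) (A : Set (Env d)) (hA : MeasurableSet[Sfield ℓ (k : ℝ)] A) :
    ∫⁻ ω, Lfun M A ω ∂ν ≤ ν A := by
  rw [hν k hk A hA]
  refine le_iInf fun j => ?_
  obtain ⟨j, hjk⟩ := j
  show ∫⁻ ω, Lfun M A ω ∂ν ≤ acPartOn ℓ ((j : ℤ) : ℝ) IP IPinf A
  have hc0 : 0 ≤ cb d M ℓ := cb_nonneg d M ℓ
  set a : ℤ := j - (⌈cb d M ℓ⌉₊ : ℤ) with hadef
  have hcm : cb d M ℓ ≤ (⌈cb d M ℓ⌉₊ : ℝ) := Nat.le_ceil _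
  have hjkR : ((j : ℤ) : ℝ) ≤ (k : ℝ) := by exact_mod_cast hjk
  have hkR : (k : ℝ) ≤ 0 := by exact_mod_cast hk
  have hac : ((a : ℤ) : ℝ) + cb d M ℓ ≤ ((j : ℤ) : ℝ) := by
    rw [hadef]; push_cast; linarith
  have ha0 : ((a : ℤ) : ℝ) ≤ 0 := by linarith
  have haZ : a ≤ 0 := by exact_mod_cast ha0
  have hAj : MeasurableSet[Sfield ℓ ((j : ℤ) : ℝ)] A := Sfield_mono ℓ hjkR A hA
  have hAac : MeasurableSet[Sfield ℓ ((a : ℝ) + cb d M ℓ)] A := Sfield_mono ℓ hac A hAj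
  have htr := trim_le_acPart ℓ IP IPinf ν hν a haZ
  calc ∫⁻ ω, Lfun M A ω ∂ν
      = @lintegral _ (Sfield ℓ (a : ℝ)) (ν.trim (Sfield_le ℓ (a : ℝ))) (Lfun M A) :=
        (lintegral_trim _ (Lfun_meas ℓ ha0 le_rfl hAac)).symm
    _ ≤ @lintegral _ (Sfield ℓ (a : ℝ)) (acPartOn ℓ (a : ℝ) IP IPinf) (Lfun M A) :=
        lintegral_mono' htr le_rfl
    _ = PiTr M ℓ (a : ℝ) ((a : ℝ) + cb d M ℓ) (acPartOn ℓ (a : ℝ) IP IPinf) A :=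
        (PiTr_apply ℓ ha0 le_rfl _ hAac).symm
    _ ≤ acPartOn ℓ ((a : ℝ) + cb d M ℓ) IP IPinf A :=
        PiTr_acPart_le ℓ ha0 le_rfl IP IPinf hsh hinv hAac
    _ ≤ acPartOn ℓ ((j : ℤ) : ℝ) IP IPinf A := acPart_mono_level ℓ hac IP IPinf hAj

end ACAux
namespace ACAux

set_option maxHeartbeats 1000000 in
lemma key_ge {d M : ℕ} (ℓ : Fin d → ℝ) (IP : Measure (Env d)) [IsProbabilityMeasure IP]
    (hsh : ShiftInv IP) (IPinf : Measure (Env d)) [IsProbabilityMeasure IPinf]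
    (hinv : EnvInvariant M IPinf) (ν : Measure (Env d)) [IsFiniteMeasure ν]
    (hν : ∀ k : ℤ, k ≤ 0 → ∀ A : Set (Env d), MeasurableSet[Sfield ℓ (k : ℝ)] A →
      ν A = ⨅ j : {j : ℤ // j ≤ k}, acPartOn ℓ (j : ℝ) IP IPinf A)
    (k : ℤ) (hk : k ≤ 0) (A : Set (Env d)) (hA : MeasurableSet[Sfield ℓ (k : ℝ)] A) :
    ν A ≤ ∫⁻ ω, Lfun M A ω ∂ν := by
  have hc0 : 0 ≤ cb d M ℓ := cb_nonneg d M ℓ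
  have hcm : cb d M ℓ ≤ (⌈cb d M ℓ⌉₊ : ℝ) := Nat.le_ceil _
  have hmnn : (0 : ℤ) ≤ (⌈cb d M ℓ⌉₊ : ℤ) := Int.natCast_nonneg _
  set a₀ : ℤ := k - (⌈cb d M ℓ⌉₊ : ℤ) with ha₀def
  have hkR : (k : ℝ) ≤ 0 := by exact_mod_cast hk
  have ha₀Z : a₀ ≤ 0 := by omega
  have ha₀R : (a₀ : ℝ) ≤ 0 := by exact_mod_cast ha₀Z
  -- the master inequality at each level `aa ≤ a₀`
  have master : ∀ aa : ℤ, aa ≤ a₀ →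
      ν A ≤ (∫⁻ ω, Lfun M A ω ∂ν)
        + @lintegral _ (Sfield ℓ (aa : ℝ)) (delta ℓ IP IPinf ν (aa : ℝ)) (Lfun M A) := by
    intro aa haa
    have haaR : (aa : ℝ) ≤ (a₀ : ℝ) := by exact_mod_cast haa
    have ha₀cast : (a₀ : ℝ) = (k : ℝ) - (⌈cb d M ℓ⌉₊ : ℝ) := by rw [ha₀def]; push_cast; ring
    have haac : (aa : ℝ) + cb d M ℓ ≤ (k : ℝ) := by rw [ha₀cast] at haaR; linarith
    have ha0 : (aa : ℝ) ≤ 0 := by linarith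
    have haaZ0 : aa ≤ 0 := by exact_mod_cast ha0
    have hAac : MeasurableSet[Sfield ℓ ((aa : ℝ) + cb d M ℓ)] A := Sfield_mono ℓ haac A hA
    have hAmc : MeasurableSet[Sfield ℓ ((aa : ℝ) - cb d M ℓ)] A :=
      Sfield_mono ℓ (by linarith) A hA
    have htr := trim_le_acPart ℓ IP IPinf ν hν aa haaZ0
    haveI : IsFiniteMeasure (ν.trim (Sfield_le ℓ (aa : ℝ))) := isFiniteMeasure_trim _
    have hsum : delta ℓ IP IPinf ν (aa : ℝ) + ν.trim (Sfield_le ℓ (aa : ℝ))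
        = acPartOn ℓ (aa : ℝ) IP IPinf := Measure.sub_add_cancel_of_le htr
    have hstep : ν A ≤ acPartOn ℓ ((aa : ℝ) - cb d M ℓ) IP IPinf A := by
      have h1 : ν A ≤ acPartOn ℓ ((aa - (⌈cb d M ℓ⌉₊ : ℤ) : ℤ) : ℝ) IP IPinf A := by
        rw [hν k hk A hA]
        have h2 := iInf_le (fun j : {j : ℤ // j ≤ k} => acPartOn ℓ (j : ℝ) IP IPinf A)
          ⟨aa - (⌈cb d M ℓ⌉₊ : ℤ), by omega⟩
        simp only [Subtype.coe_mk] at h2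
        exact h2
      refine h1.trans (acPart_mono_level ℓ ?_ IP IPinf hAmc)
      push_cast
      linarith
    calc ν A ≤ acPartOn ℓ ((aa : ℝ) - cb d M ℓ) IP IPinf A := hstep
      _ ≤ @lintegral _ (Sfield ℓ (aa : ℝ)) (acPartOn ℓ (aa : ℝ) IP IPinf) (Lfun M A) :=
          acPart_le_lintegral ℓ ha0 IP IPinf hsh hinv hAac
      _ = @lintegral _ (Sfield ℓ (aa : ℝ))
            (delta ℓ IP IPinf ν (aa : ℝ) + ν.trim (Sfield_le ℓ (aa : ℝ))) (Lfun M A) := by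
          rw [hsum]
      _ = @lintegral _ (Sfield ℓ (aa : ℝ)) (delta ℓ IP IPinf ν (aa : ℝ)) (Lfun M A)
          + @lintegral _ (Sfield ℓ (aa : ℝ)) (ν.trim (Sfield_le ℓ (aa : ℝ))) (Lfun M A) :=
          lintegral_add_measure _ _ _
      _ = (∫⁻ ω, Lfun M A ω ∂ν)
          + @lintegral _ (Sfield ℓ (aa : ℝ)) (delta ℓ IP IPinf ν (aa : ℝ)) (Lfun M A) := by
          rw [lintegral_trim _ (Lfun_meas ℓ ha0 le_rfl hAac), add_comm]
  -- the ε-argument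
  refine ENNReal.le_of_forall_pos_le_add fun ε hε _hfin => ?_
  have hεE : (ε : ℝ≥0∞) ≠ 0 := by exact_mod_cast hε.ne'
  have hhalf : (0 : ℝ≥0∞) < (ε : ℝ≥0∞) / 2 := ENNReal.half_pos hεE
  set s : Env d → ℝ≥0∞ := Lfun M Set.univ with hsdef
  have hsmeas : Measurable[Sfield ℓ (a₀ : ℝ)] s :=
    Lfun_meas ℓ ha₀R le_rfl MeasurableSet.univ
  have hsfin : ∀ ω, s ω ≠ ⊤ := by
    intro ω
    have hrw : s ω = ∑ e ∈ box d M, ENNReal.ofReal (ω 0 e) := by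
      rw [hsdef]
      unfold Lfun
      refine Finset.sum_congr rfl fun e _ => ?_
      rw [Set.indicator_univ]
      simp
    rw [hrw]
    exact (ENNReal.sum_lt_top.mpr fun e _ => ENNReal.ofReal_lt_top).ne
  have htr₀ := trim_le_acPart ℓ IP IPinf ν hν a₀ ha₀Z
  haveI : IsFiniteMeasure (ν.trim (Sfield_le ℓ (a₀ : ℝ))) := isFiniteMeasure_trim _
  -- the gap measure at level a₀ has finite s-integral
  have hδ₀int : @lintegral _ (Sfield ℓ (a₀ : ℝ)) (delta ℓ IP IPinf ν (a₀ : ℝ)) s ≤ 1 := by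
    calc @lintegral _ (Sfield ℓ (a₀ : ℝ)) (delta ℓ IP IPinf ν (a₀ : ℝ)) s
        ≤ @lintegral _ (Sfield ℓ (a₀ : ℝ)) (acPartOn ℓ (a₀ : ℝ) IP IPinf) s :=
          lintegral_mono' Measure.sub_le le_rfl
      _ ≤ @lintegral _ (Sfield ℓ (a₀ : ℝ)) (IPinf.trim (Sfield_le ℓ (a₀ : ℝ))) s :=
          lintegral_mono' (Measure.withDensity_rnDeriv_le _ _) le_rfl
      _ = ∫⁻ ω, s ω ∂IPinf := lintegral_trim _ hsmeas
      _ = IPinf Set.univ := hinv Set.univ MeasurableSet.univ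
      _ = 1 := measure_univ
  -- truncation sequence
  set F : ℕ → Env d → ℝ≥0∞ := fun n => {ω | (n : ℝ≥0∞) < s ω}.indicator s with hFdef
  have hsetmeas : ∀ n : ℕ, MeasurableSet[Sfield ℓ (a₀ : ℝ)] {ω | (n : ℝ≥0∞) < s ω} :=
    fun n => measurableSet_lt measurable_const hsmeas
  have hFmeas : ∀ n, Measurable[Sfield ℓ (a₀ : ℝ)] (F n) :=
    fun n => hsmeas.indicator (hsetmeas n)
  have htend : Filter.Tendsto
      (fun n => @lintegral _ (Sfield ℓ (a₀ : ℝ)) (delta ℓ IP IPinf ν (a₀ : ℝ)) (F n))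
      Filter.atTop (nhds 0) := by
    have h0 : (0 : ℝ≥0∞)
        = @lintegral _ (Sfield ℓ (a₀ : ℝ)) (delta ℓ IP IPinf ν (a₀ : ℝ)) (fun _ => 0) := by
      rw [lintegral_zero]
    rw [h0]
    refine @tendsto_lintegral_of_dominated_convergence _ (Sfield ℓ (a₀ : ℝ)) _ _ _ s hFmeas
      (fun n => Filter.Eventually.of_forall fun ω => Set.indicator_le_self _ _ ω)
      (hδ₀int.trans_lt ENNReal.one_lt_top).ne (Filter.Eventually.of_forall fun ω => ?_)
    obtain ⟨n₀, hn₀⟩ := ENNReal.exists_nat_gt (hsfin ω)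
    refine tendsto_atTop_of_eventually_const (i₀ := n₀) fun n hn => ?_
    refine Set.indicator_of_notMem ?_ _
    simp only [Set.mem_setOf_eq, not_lt]
    exact le_trans hn₀.le (by exact_mod_cast hn)
  obtain ⟨n, hn⟩ := (htend.eventually (gt_mem_nhds hhalf)).exists
  -- choose a deep level where the gap measure is small
  set η : ℝ≥0∞ := ((ε : ℝ≥0∞) / 2) / ((n : ℝ≥0∞) + 1) with hηdef
  have hη0 : η ≠ 0 := ENNReal.div_ne_zero.mpr
    ⟨hhalf.ne', by simp [ENNReal.add_eq_top, ENNReal.natCast_ne_top]⟩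
  have hνuniv := hν k hk Set.univ MeasurableSet.univ
  have hlt : (⨅ j : {j : ℤ // j ≤ k}, acPartOn ℓ (j : ℝ) IP IPinf Set.univ)
      < ν Set.univ + η := by
    rw [← hνuniv]
    exact ENNReal.lt_add_right (measure_ne_top ν _) hη0
  obtain ⟨⟨j₁, hj₁⟩, hjlt⟩ := iInf_lt_iff.mp hlt
  set aa : ℤ := min j₁ a₀ with haadef
  have haaZ : aa ≤ a₀ := min_le_right _ _
  have haaZ0 : aa ≤ 0 := le_trans haaZ ha₀Z
  have haaR0 : (aa : ℝ) ≤ 0 := by exact_mod_cast haaZ0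
  have haaj₁ : (aa : ℝ) ≤ (j₁ : ℝ) := by exact_mod_cast (min_le_left j₁ a₀)
  have haaa₀R : (aa : ℝ) ≤ (a₀ : ℝ) := by exact_mod_cast haaZ
  have htr_aa := trim_le_acPart ℓ IP IPinf ν hν aa haaZ0
  haveI : IsFiniteMeasure (ν.trim (Sfield_le ℓ (aa : ℝ))) := isFiniteMeasure_trim _
  -- the gap at level aa is at most η
  have hδaa_univ : delta ℓ IP IPinf ν (aa : ℝ) Set.univ ≤ η := by
    have h1 : delta ℓ IP IPinf ν (aa : ℝ) Set.univ
        = acPartOn ℓ (aa : ℝ) IP IPinf Set.univ - ν Set.univ := by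
      rw [delta, Measure.sub_apply MeasurableSet.univ htr_aa,
        trim_measurableSet_eq _ MeasurableSet.univ]
    have h2 : acPartOn ℓ (aa : ℝ) IP IPinf Set.univ
        ≤ acPartOn ℓ ((j₁ : ℤ) : ℝ) IP IPinf Set.univ :=
      acPart_mono_level ℓ haaj₁ IP IPinf MeasurableSet.univ
    have h3 : acPartOn ℓ ((j₁ : ℤ) : ℝ) IP IPinf Set.univ ≤ ν Set.univ + η := by
      have := hjlt
      simp only [Subtype.coe_mk] at this
      exact this.le
    rw [h1]
    refine tsub_le_iff_right.mpr ?_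
    rw [add_comm]
    exact h2.trans h3
  -- comparison of the gap measures
  have hcmp : ∀ B : Set (Env d), MeasurableSet[Sfield ℓ (a₀ : ℝ)] B →
      (delta ℓ IP IPinf ν (aa : ℝ)).trim (Sfield_mono ℓ haaa₀R) B
        ≤ delta ℓ IP IPinf ν (a₀ : ℝ) B := by
    intro B hB
    have hBaa : MeasurableSet[Sfield ℓ (aa : ℝ)] B := Sfield_mono ℓ haaa₀R B hB
    rw [trim_measurableSet_eq _ hB]
    rw [delta, Measure.sub_apply hBaa htr_aa, trim_measurableSet_eq _ hBaa]
    rw [delta, Measure.sub_apply hB htr₀, trim_measurableSet_eq _ hB]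
    exact tsub_le_tsub_right (acPart_mono_level ℓ haaa₀R IP IPinf hB) _
  have hFn_aa : @lintegral _ (Sfield ℓ (aa : ℝ)) (delta ℓ IP IPinf ν (aa : ℝ)) (F n)
      ≤ (ε : ℝ≥0∞) / 2 := by
    calc @lintegral _ (Sfield ℓ (aa : ℝ)) (delta ℓ IP IPinf ν (aa : ℝ)) (F n)
        = @lintegral _ (Sfield ℓ (a₀ : ℝ))
            ((delta ℓ IP IPinf ν (aa : ℝ)).trim (Sfield_mono ℓ haaa₀R)) (F n) :=
          (lintegral_trim _ (hFmeas n)).symm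
      _ ≤ @lintegral _ (Sfield ℓ (a₀ : ℝ)) (delta ℓ IP IPinf ν (a₀ : ℝ)) (F n) :=
          lintegral_mono' (Measure.le_iff.mpr hcmp) le_rfl
      _ ≤ (ε : ℝ≥0∞) / 2 := hn.le
  -- the error bound
  have hE : @lintegral _ (Sfield ℓ (aa : ℝ)) (delta ℓ IP IPinf ν (aa : ℝ)) (Lfun M A)
      ≤ (ε : ℝ≥0∞) := by
    have hpt : ∀ ω, Lfun M A ω ≤ (n : ℝ≥0∞) + F n ω := by
      intro ω
      refine (Lfun_le_s ω).trans ?_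
      by_cases h : (n : ℝ≥0∞) < s ω
      · have hmem : ω ∈ {ω | (n : ℝ≥0∞) < s ω} := h
        have heq : {ω | (n : ℝ≥0∞) < s ω}.indicator s ω = s ω := Set.indicator_of_mem hmem s
        show Lfun M Set.univ ω ≤ (n : ℝ≥0∞) + {ω | (n : ℝ≥0∞) < s ω}.indicator s ω
        rw [heq]
        exact le_add_self
      · exact le_add_right (not_lt.mp h)
    calc @lintegral _ (Sfield ℓ (aa : ℝ)) (delta ℓ IP IPinf ν (aa : ℝ)) (Lfun M A)
        ≤ @lintegral _ (Sfield ℓ (aa : ℝ)) (delta ℓ IP IPinf ν (aa : ℝ))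
            (fun ω => (n : ℝ≥0∞) + F n ω) := lintegral_mono hpt
      _ = (n : ℝ≥0∞) * delta ℓ IP IPinf ν (aa : ℝ) Set.univ
          + @lintegral _ (Sfield ℓ (aa : ℝ)) (delta ℓ IP IPinf ν (aa : ℝ)) (F n) := by
          rw [lintegral_add_left measurable_const, lintegral_const]
      _ ≤ (n : ℝ≥0∞) * η + (ε : ℝ≥0∞) / 2 :=
          add_le_add (mul_le_mul_right hδaa_univ _) hFn_aa
      _ ≤ (ε : ℝ≥0∞) / 2 + (ε : ℝ≥0∞) / 2 := by
          refine add_le_add_left ?_ _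
          calc (n : ℝ≥0∞) * η ≤ ((n : ℝ≥0∞) + 1) * η := mul_le_mul_left le_self_add _
            _ = (ε : ℝ≥0∞) / 2 := by
                rw [hηdef]
                exact ENNReal.mul_div_cancel' (by simp) (by
                  simp [ENNReal.add_eq_top, ENNReal.natCast_ne_top])
      _ = (ε : ℝ≥0∞) := ENNReal.add_halves _
  exact (master aa haaZ).trans (add_le_add_right hE _)

end ACAux
namespace ACAux

lemma key_eq {d M : ℕ} (ℓ : Fin d → ℝ) (IP : Measure (Env d)) [IsProbabilityMeasure IP]
    (hsh : ShiftInv IP) (IPinf : Measure (Env d)) [IsProbabilityMeasure IPinf]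
    (hinv : EnvInvariant M IPinf) (ν : Measure (Env d)) [IsFiniteMeasure ν]
    (hν : ∀ k : ℤ, k ≤ 0 → ∀ A : Set (Env d), MeasurableSet[Sfield ℓ (k : ℝ)] A →
      ν A = ⨅ j : {j : ℤ // j ≤ k}, acPartOn ℓ (j : ℝ) IP IPinf A)
    (k : ℤ) (hk : k ≤ 0) (A : Set (Env d)) (hA : MeasurableSet[Sfield ℓ (k : ℝ)] A) :
    ∫⁻ ω, Lfun M A ω ∂ν = ν A :=
  le_antisymm (key_le ℓ IP hsh IPinf hinv ν hν k hk A hA)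
    (key_ge ℓ IP hsh IPinf hinv ν hν k hk A hA)

/-- the kernel operator at the ambient σ-algebra. -/
def PiFull {d : ℕ} (M : ℕ) (ν : Measure (Env d)) : Measure (Env d) :=
  ∑ e ∈ box d M, Measure.map (shiftE e) (ν.withDensity fun ω => ENNReal.ofReal (ω 0 e))

lemma PiFull_apply {d M : ℕ} (ν : Measure (Env d)) {A : Set (Env d)}
    (hA : MeasurableSet A) : PiFull M ν A = ∫⁻ ω, Lfun M A ω ∂ν := by
  have hpre : ∀ e : Zd d, MeasurableSet ((shiftE e) ⁻¹' A) :=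
    fun e => measurable_shiftE_ambient e hA
  have hg : ∀ e : Zd d, Measurable fun ω : Env d => ENNReal.ofReal (ω 0 e) :=
    fun e => ENNReal.measurable_ofReal.comp ((measurable_pi_apply e).comp (measurable_pi_apply 0))
  calc PiFull M ν A
      = ∑ e ∈ box d M,
          (Measure.map (shiftE e) (ν.withDensity fun ω => ENNReal.ofReal (ω 0 e))) A := by
        rw [PiFull]; exact Measure.finset_sum_apply _ _ _
    _ = ∑ e ∈ box d M, ∫⁻ ω, ((shiftE e) ⁻¹' A).indicator
          (fun ω' => ENNReal.ofReal (ω' 0 e)) ω ∂ν := by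
        refine Finset.sum_congr rfl fun e _ => ?_
        rw [Measure.map_apply (measurable_shiftE_ambient e) hA,
          withDensity_apply _ (hpre e), ← lintegral_indicator (hpre e)]
    _ = ∫⁻ ω, ∑ e ∈ box d M, ((shiftE e) ⁻¹' A).indicator
          (fun ω' => ENNReal.ofReal (ω' 0 e)) ω ∂ν :=
        (lintegral_finset_sum _ fun e _ => (hg e).indicator (hpre e)).symm
    _ = ∫⁻ ω, Lfun M A ω ∂ν := by
        refine congrArg _ ?_
        funext ω
        rw [Lfun_rep]

/-- the generating π-system of half-space-measurable sets. -/
def genC (d : ℕ) (ℓ : Fin d → ℝ) : Set (Set (Env d)) :=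
  {A | ∃ k : ℤ, k ≤ 0 ∧ MeasurableSet[Sfield ℓ (k : ℝ)] A}

lemma genC_pi (d : ℕ) (ℓ : Fin d → ℝ) : IsPiSystem (genC d ℓ) := by
  rintro A ⟨k1, hk1, h1⟩ B ⟨k2, hk2, h2⟩ _
  refine ⟨min k1 k2, le_trans (min_le_left _ _) hk1, ?_⟩
  have hm1 : ((min k1 k2 : ℤ) : ℝ) ≤ (k1 : ℝ) := by exact_mod_cast min_le_left k1 k2
  have hm2 : ((min k1 k2 : ℤ) : ℝ) ≤ (k2 : ℝ) := by exact_mod_cast min_le_right k1 k2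
  exact (Sfield_mono ℓ hm1 A h1).inter (Sfield_mono ℓ hm2 B h2)

lemma genC_generate (d : ℕ) (ℓ : Fin d → ℝ) :
    (inferInstance : MeasurableSpace (Env d)) = MeasurableSpace.generateFrom (genC d ℓ) := by
  refine le_antisymm ?_ ?_
  · -- ambient ≤ generated
    have hev : ∀ x : Zd d, @Measurable _ _ (MeasurableSpace.generateFrom (genC d ℓ)) _
        (fun ω : Env d => ω x) := by
      intro x
      rw [measurable_iff_comap_le]
      set k : ℤ := min ⌊dotl x ℓ⌋ 0 with hkdef
      have hk0 : k ≤ 0 := min_le_right _ _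
      have hkle : (k : ℝ) ≤ dotl x ℓ := by
        have h1 : ((k : ℤ) : ℝ) ≤ ((⌊dotl x ℓ⌋ : ℤ) : ℝ) := by
          exact_mod_cast min_le_left ⌊dotl x ℓ⌋ 0
        exact h1.trans (Int.floor_le _)
      have h1 : MeasurableSpace.comap (fun ω : Env d => ω x) inferInstance
          ≤ Sfield ℓ (k : ℝ) :=
        le_iSup₂ (f := fun (y : Zd d) (_ : y ∈ {y : Zd d | (k : ℝ) ≤ dotl y ℓ}) =>
          MeasurableSpace.comap (fun ω : Env d => ω y) inferInstance) x hkle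
      refine h1.trans ?_
      intro B hB
      exact MeasurableSpace.measurableSet_generateFrom ⟨k, hk0, hB⟩
    have hid : @Measurable (Env d) (Env d) (MeasurableSpace.generateFrom (genC d ℓ)) _ id :=
      (@measurable_pi_iff (Env d) (Zd d) (fun _ => Zd d → ℝ)
        (MeasurableSpace.generateFrom (genC d ℓ)) (fun _ => inferInstance) id).mpr
        fun x => hev x
    have := measurable_iff_comap_le.mp hid
    rwa [MeasurableSpace.comap_id] at this
  · exact MeasurableSpace.generateFrom_le fun A ⟨k, _, hA⟩ => Sfield_le ℓ (k : ℝ) A hA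

end ACAux

open ACAux in
set_option maxHeartbeats 1000000 in
/-- if `IP_∞` is invariant for the environment process and the
measure `IP_∞^{∞,≪}`, defined on each `S_k` as the decreasing limit (infimum) of
the absolutely continuous parts `IP_∞^{j,≪}`, has positive total mass, then its
normalization is an invariant probability measure for the environment process,
absolutely continuous w.r.t. `IP` on every half-space σ-field `S_k`, `k ≤ 0`. -/
theorem ac_part_invariant {d M : ℕ} (ℓ : Fin d → ℝ)
    (IP : Measure (Env d)) [IsProbabilityMeasure IP] (hsh : ShiftInv IP)
    (IPinf : Measure (Env d)) [IsProbabilityMeasure IPinf]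
    (hinv : EnvInvariant M IPinf)
    (ν : Measure (Env d)) [IsFiniteMeasure ν]
    (hν : ∀ k : ℤ, k ≤ 0 → ∀ A : Set (Env d), MeasurableSet[Sfield ℓ (k : ℝ)] A →
      ν A = ⨅ j : {j : ℤ // j ≤ k}, acPartOn ℓ (j : ℝ) IP IPinf A)
    (hpos : 0 < ν Set.univ) :
    IsProbabilityMeasure ((ν Set.univ)⁻¹ • ν) ∧
    EnvInvariant M ((ν Set.univ)⁻¹ • ν) ∧
    ∀ k : ℤ, k ≤ 0 → ∀ A : Set (Env d), MeasurableSet[Sfield ℓ (k : ℝ)] A →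
      IP A = 0 → ((ν Set.univ)⁻¹ • ν) A = 0 := by
  have hνfin : ν Set.univ ≠ ⊤ := measure_ne_top ν _
  -- the kernel fixes ν on every generating set
  have hgen : ∀ s ∈ genC d ℓ, PiFull M ν s = ν s := by
    rintro s ⟨k, hk, hs⟩
    rw [PiFull_apply ν (Sfield_le ℓ (k : ℝ) s hs)]
    exact key_eq ℓ IP hsh IPinf hinv ν hν k hk s hs
  have huniv : PiFull M ν Set.univ = ν Set.univ :=
    hgen Set.univ ⟨0, le_rfl, MeasurableSet.univ⟩
  haveI : IsFiniteMeasure (PiFull M ν) :=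
    ⟨by rw [huniv]; exact measure_lt_top ν _⟩
  have hext : PiFull M ν = ν :=
    MeasureTheory.ext_of_generate_finite (genC d ℓ) (genC_generate d ℓ) (genC_pi d ℓ)
      hgen huniv
  have hfix : ∀ A : Set (Env d), MeasurableSet A → ∫⁻ ω, Lfun M A ω ∂ν = ν A := by
    intro A hA
    rw [← PiFull_apply ν hA, hext]
  refine ⟨?_, ?_, ?_⟩
  · exact ⟨by
      rw [Measure.smul_apply, smul_eq_mul, ENNReal.inv_mul_cancel hpos.ne' hνfin]⟩
  · intro A hA
    have hbody : (fun ω : Env d => ∑ e ∈ box d M,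
        ENNReal.ofReal (ω 0 e) * A.indicator 1 (shiftE e ω)) = Lfun M A := rfl
    show ∫⁻ ω, ∑ e ∈ box d M, ENNReal.ofReal (ω 0 e) * A.indicator 1 (shiftE e ω)
        ∂((ν Set.univ)⁻¹ • ν) = ((ν Set.univ)⁻¹ • ν) A
    rw [hbody, lintegral_smul_measure, Measure.smul_apply, smul_eq_mul, hfix A hA]
    rfl
  · intro k hk A hA h0
    have hA0 : ν A = 0 := by
      rw [hν k hk A hA]
      refine le_antisymm ?_ zero_le
      have h2 := iInf_le (fun j : {j : ℤ // j ≤ k} => acPartOn ℓ (j : ℝ) IP IPinf A)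
        ⟨k, le_rfl⟩
      simp only [Subtype.coe_mk] at h2
      refine h2.trans ?_
      rw [acPart_null ℓ ((k : ℤ) : ℝ) IP IPinf hA h0]
    rw [Measure.smul_apply, smul_eq_mul, hA0, mul_zero]
end
end

section
/- If the law of large numbers X_n/n → v holds P_0-a.s. with deterministic v, and Kalikow's condition in direction ℓ holds with constant ε (so that E_0(X_{T_U}·ℓ) ≥ ε E_0(T_U) for slabs U_L = {x : x·ℓ ≤ L}), then v ≠ 0; in fact v·ℓ > 0. -/
open MeasureTheory Filter Set
open scoped ENNReal

noncomputable section

/-- the exit time of the slab `U_L = {x : x·ℓ ≤ L}`. -/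
def exitSlab {d : ℕ} (ℓ : Fin d → ℝ) (L : ℝ) (w : Traj d) : ℕ :=
  sInf {n | L < dotl (w n) ℓ}


namespace VelAux

variable {d : ℕ}

lemma measSet (s : Set (Zd d)) : MeasurableSet s := s.to_countable.measurableSet

lemma measTraj1 (n : ℕ) (p : Zd d → Prop) : MeasurableSet {w : Traj d | p (w n)} :=
  measurable_pi_apply n (measSet {x | p x})

lemma measTraj2 (n m : ℕ) (p q : Zd d → Prop) :
    MeasurableSet {w : Traj d | p (w n) ∧ q (w m)} :=
  (measTraj1 n p).inter (measTraj1 m q)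

lemma measA (ℓ : Fin d → ℝ) (L : ℝ) (n : ℕ) :
    MeasurableSet {w : Traj d | ∀ m ≤ n, dotl (w m) ℓ ≤ L} := by
  have h : {w : Traj d | ∀ m ≤ n, dotl (w m) ℓ ≤ L}
      = ⋂ m ∈ Finset.range (n + 1), {w : Traj d | dotl (w m) ℓ ≤ L} := by
    ext w; simp [Nat.lt_succ_iff]
  rw [h]
  exact MeasurableSet.biInter (Set.to_countable _) fun m _ => measTraj1 m (fun x => dotl x ℓ ≤ L)

lemma measE (ℓ : Fin d → ℝ) (δ : ℝ) (k : ℕ) :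
    MeasurableSet {w : Traj d | ∀ n : ℕ, dotl (w n) ℓ ≤ δ * n + k} := by
  have h : {w : Traj d | ∀ n : ℕ, dotl (w n) ℓ ≤ δ * n + k}
      = ⋂ n : ℕ, {w : Traj d | dotl (w n) ℓ ≤ δ * n + k} := by ext w; simp
  rw [h]
  exact MeasurableSet.iInter fun n => measTraj1 n (fun x => dotl x ℓ ≤ δ * n + k)

lemma dotl_zero (ℓ : Fin d → ℝ) : dotl (0 : Zd d) ℓ = 0 := by
  simp [dotl]

lemma dotl_sub (ℓ : Fin d → ℝ) (a b : Zd d) :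
    dotl a ℓ = dotl b ℓ + dotl (a - b) ℓ := by
  simp only [dotl, Pi.sub_apply]
  rw [← Finset.sum_add_distrib]
  congr 1; funext i; push_cast; ring

lemma dotl_box_bound (M : ℕ) (ℓ : Fin d → ℝ) {e : Zd d} (he : e ∈ box d M) :
    dotl e ℓ ≤ M * ∑ i, |ℓ i| := by
  obtain ⟨h1, h2⟩ := Finset.mem_Icc.mp he
  have habs : ∀ i, |(e i : ℝ)| ≤ (M : ℝ) := by
    intro i
    have hl := h1 i
    have hu := h2 i
    simp only at hl hu
    rw [abs_le]
    constructor
    · exact_mod_cast hl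
    · exact_mod_cast hu
  calc dotl e ℓ ≤ ∑ i, |(e i : ℝ)| * |ℓ i| := by
        refine Finset.sum_le_sum fun i _ => ?_
        calc (e i : ℝ) * ℓ i ≤ |(e i : ℝ) * ℓ i| := le_abs_self _
          _ = |(e i : ℝ)| * |ℓ i| := abs_mul _ _
    _ ≤ ∑ i, (M : ℝ) * |ℓ i| := by
        refine Finset.sum_le_sum fun i _ => ?_
        exact mul_le_mul_of_nonneg_right (habs i) (abs_nonneg _)
    _ = M * ∑ i, |ℓ i| := by rw [Finset.mul_sum]

end VelAux

open VelAux

/-- if the law of large numbers `X_n/n → v` holds `P_0`-a.s. and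
Kalikow's condition holds in direction `ℓ` with constant `ε` (so that
`E_0(X_{T_{U_L}}·ℓ) ≥ ε E_0(T_{U_L})` for the slabs `U_L = {x·ℓ ≤ L}`), then
`v ≠ 0`; in fact `v·ℓ > 0`. -/
theorem velocity_nonzero {d M : ℕ} (ℓ : Fin d → ℝ) (ε : ℝ)
    (IP : Measure (Env d)) [IsProbabilityMeasure IP]
    (P : Env d → Measure (Traj d)) (hP : ∀ᵐ ω ∂IP, IsWalk (P ω) ω 0)
    (hgood : ∀ᵐ ω ∂IP, GoodEnv M ω)
    (ann : Measure (Traj d))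
    (hann : ∀ S : Set (Traj d), MeasurableSet S → ann S = ∫⁻ ω, P ω S ∂IP)
    (hkal : KalikowCond IP P M ℓ ε)
    (hball : ∀ L : ℕ, 1 ≤ L →
      (∑' n : ℕ, ann {w | ∀ m ≤ n, dotl (w m) ℓ ≤ L}) ≠ ⊤ ∧
      ε * (∑' n : ℕ, ann {w | ∀ m ≤ n, dotl (w m) ℓ ≤ L}).toReal ≤
        ∫ w, dotl (w (exitSlab ℓ L w)) ℓ ∂ann)
    (v : Fin d → ℝ)
    (hlln : ann {w | ∀ i : Fin d,
      Tendsto (fun n : ℕ => (w n i : ℝ) / n) atTop (nhds (v i))} = 1) :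
    v ≠ 0 ∧ 0 < ∑ i, v i * ℓ i := by
  classical
  obtain ⟨hε, -⟩ := hkal
  haveI : IsProbabilityMeasure ann := by
    constructor
    rw [hann _ MeasurableSet.univ]
    have h1 : (fun ω => P ω Set.univ) =ᵐ[IP] (fun _ => 1) := by
      filter_upwards [hP] with ω hω
      have : IsProbabilityMeasure (P ω) := hω.1
      exact measure_univ
    rw [lintegral_congr_ae h1, lintegral_one, measure_univ]
  set c : ℝ := M * ∑ i, |ℓ i| with hc
  have hc0 : 0 ≤ c := by positivity
  -- the bad set of trajectories with a jump outside the box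
  set Bad : Set (Traj d) := ⋃ (n : ℕ), ⋃ (p : Zd d × Zd d),
    (if p.2 - p.1 ∈ box d M then (∅ : Set (Traj d))
      else {w : Traj d | w n = p.1 ∧ w (n + 1) = p.2}) with hBadDef
  have measBad : MeasurableSet Bad := by
    refine MeasurableSet.iUnion fun n => MeasurableSet.iUnion fun p => ?_
    split
    · exact MeasurableSet.empty
    · exact measTraj2 n (n + 1) (fun x => x = p.1) (fun x => x = p.2)
  have hN2 : ann Bad = 0 := by
    rw [hann _ measBad]
    have h0 : (fun ω => P ω Bad) =ᵐ[IP] 0 := by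
      filter_upwards [hP, hgood] with ω hω hg
      show P ω Bad = 0
      refine measure_iUnion_null fun n => measure_iUnion_null fun p => ?_
      by_cases hb : p.2 - p.1 ∈ box d M
      · simp [hb]
      · simp only [hb, if_false]
        have key := hω.2.2 n Set.univ MeasurableSet.univ (fun _ _ _ => Iff.rfl) p.1 p.2
        rw [Set.univ_inter, Set.univ_inter] at key
        rw [key, hg.2.2 p.1 (p.2 - p.1) hb]
        simp
    rw [lintegral_congr_ae h0]
    simp
  have hN1 : ann {w : Traj d | w 0 = 0}ᶜ = 0 := by
    rw [hann _ (measTraj1 0 (fun x => x = 0)).compl]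
    have h0 : (fun ω => P ω {w : Traj d | w 0 = 0}ᶜ) =ᵐ[IP] 0 := by
      filter_upwards [hP] with ω hω
      show P ω {w : Traj d | w 0 = 0}ᶜ = 0
      haveI : IsProbabilityMeasure (P ω) := hω.1
      rw [measure_compl (measTraj1 0 (fun x => x = 0)) (measure_ne_top _ _), hω.2.1,
        measure_univ, tsub_self]
    rw [lintegral_congr_ae h0]
    simp
  have hNull : ann ({w : Traj d | w 0 = 0}ᶜ ∪ Bad) = 0 := measure_union_null hN1 hN2
  -- pointwise bound on the exit position
  have hpt : ∀ (L : ℕ), 1 ≤ L → ∀ w : Traj d, w ∉ ({w : Traj d | w 0 = 0}ᶜ ∪ Bad) →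
      dotl (w (exitSlab ℓ (L : ℝ) w)) ℓ ≤ (L : ℝ) + c := by
    intro L hL w hw
    have hw0 : w 0 = 0 := by
      by_contra h
      exact hw (Set.mem_union_left _ h)
    have hwB : w ∉ Bad := fun h => hw (Set.mem_union_right _ h)
    have hjump : ∀ n : ℕ, w (n + 1) - w n ∈ box d M := by
      intro n
      by_contra hb
      refine hwB (Set.mem_iUnion.2 ⟨n, Set.mem_iUnion.2 ⟨(w n, w (n + 1)), ?_⟩⟩)
      simp [hb]
    have hL1 : (1 : ℝ) ≤ (L : ℝ) := by exact_mod_cast hL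
    show dotl (w (sInf {n | (L : ℝ) < dotl (w n) ℓ})) ℓ ≤ (L : ℝ) + c
    by_cases hs : {n | (L : ℝ) < dotl (w n) ℓ}.Nonempty
    · have hmem := Nat.sInf_mem hs
      have hT0 : sInf {n | (L : ℝ) < dotl (w n) ℓ} ≠ 0 := by
        intro h
        rw [h] at hmem
        simp only [Set.mem_setOf_eq, hw0, dotl_zero] at hmem
        linarith
      obtain ⟨m, hm⟩ := Nat.exists_eq_succ_of_ne_zero hT0
      have hmnot : m ∉ {n | (L : ℝ) < dotl (w n) ℓ} :=
        Nat.notMem_of_lt_sInf (by omega)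
      simp only [Set.mem_setOf_eq, not_lt] at hmnot
      have hsplit := dotl_sub ℓ (w (m + 1)) (w m)
      have hbd := dotl_box_bound M ℓ (hjump m)
      rw [hm]
      rw [← hc] at hbd
      linarith
    · have h0 : sInf {n | (L : ℝ) < dotl (w n) ℓ} = 0 := by
        rw [Set.not_nonempty_iff_eq_empty.mp hs, Nat.sInf_empty]
      rw [h0, hw0, dotl_zero]
      linarith
  -- upper bound on the integral
  have hub : ∀ (L : ℕ), 1 ≤ L →
      ∫ w, dotl (w (exitSlab ℓ (L : ℝ) w)) ℓ ∂ann ≤ (L : ℝ) + c := by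
    intro L hL
    have hL1 : (1 : ℝ) ≤ (L : ℝ) := by exact_mod_cast hL
    have hae : ∀ᵐ w ∂ann, dotl (w (exitSlab ℓ (L : ℝ) w)) ℓ ≤ (L : ℝ) + c := by
      rw [ae_iff]
      refine measure_mono_null ?_ hNull
      intro w hw
      by_contra hwn
      exact hw (hpt L hL w hwn)
    by_cases hInt : Integrable (fun w => dotl (w (exitSlab ℓ (L : ℝ) w)) ℓ) ann
    · calc ∫ w, dotl (w (exitSlab ℓ (L : ℝ) w)) ℓ ∂ann
          ≤ ∫ _, ((L : ℝ) + c) ∂ann := integral_mono_ae hInt (integrable_const _) hae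
        _ = (L : ℝ) + c := by simp
    · rw [integral_undef hInt]
      linarith
  -- main positivity claim
  have hpos : 0 < ∑ i, v i * ℓ i := by
    by_contra h0'
    push_neg at h0'
    have hδ : 0 < ε / 4 := by linarith
    set E : ℕ → Set (Traj d) :=
      fun k => {w : Traj d | ∀ n : ℕ, dotl (w n) ℓ ≤ (ε / 4) * n + k} with hE
    -- LLN set is contained in the union of the E k
    have hSsub : {w : Traj d | ∀ i : Fin d,
        Tendsto (fun n : ℕ => (w n i : ℝ) / n) atTop (nhds (v i))} ⊆ ⋃ k, E k := by
      intro w hw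
      simp only [Set.mem_setOf_eq] at hw
      have hten : Tendsto (fun n : ℕ => dotl (w n) ℓ / n) atTop
          (nhds (∑ i, v i * ℓ i)) := by
        have h1 : Tendsto (fun n : ℕ => ∑ i, ((w n i : ℝ) / n * ℓ i)) atTop
            (nhds (∑ i, v i * ℓ i)) :=
          tendsto_finset_sum _ (fun i _ => (hw i).mul_const (ℓ i))
        refine h1.congr fun n => ?_
        rw [dotl, Finset.sum_div]
        exact Finset.sum_congr rfl fun i _ => by ring
      have hlt : ∀ᶠ n : ℕ in atTop, dotl (w n) ℓ / n < ε / 4 :=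
        hten.eventually_lt_const (by linarith)
      obtain ⟨N, hN⟩ := eventually_atTop.1 hlt
      obtain ⟨k, hk⟩ := exists_nat_gt
        ((Finset.range (N + 1)).sup' (by simp) (fun n => dotl (w n) ℓ))
      refine Set.mem_iUnion.2 ⟨k, fun n => ?_⟩
      have hk0 : (0 : ℝ) ≤ (k : ℝ) := Nat.cast_nonneg k
      by_cases hn : n ≤ N
      · have h1 : dotl (w n) ℓ ≤ (Finset.range (N + 1)).sup' (by simp)
            (fun n => dotl (w n) ℓ) :=
          Finset.le_sup' (fun n => dotl (w n) ℓ)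
            (Finset.mem_range.mpr (Nat.lt_succ_of_le hn))
        have h2 : (0 : ℝ) ≤ (ε / 4) * n := by positivity
        linarith
      · push_neg at hn
        have h1 := hN n (by omega)
        have hnpos : (0 : ℝ) < (n : ℝ) := by
          have : 0 < n := by omega
          exact_mod_cast this
        have h2 := (div_lt_iff₀ hnpos).mp h1
        linarith
    -- pick k₀ with ann (E k₀) > 1/2
    have hdir : Directed (· ⊆ ·) E := by
      refine (monotone_nat_of_le_succ ?_).directed_le
      intro k w hw n
      have := hw n
      have hcast : (k : ℝ) ≤ ((k + 1 : ℕ) : ℝ) := by push_cast; linarith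
      linarith
    have hun : ann (⋃ k, E k) = ⨆ k, ann (E k) := hdir.measure_iUnion
    have h1 : (1 : ℝ≥0∞) ≤ ⨆ k, ann (E k) := by
      rw [← hun]
      exact le_trans (le_of_eq hlln.symm) (measure_mono hSsub)
    have hhalf : (1 : ℝ≥0∞) / 2 < ⨆ k, ann (E k) :=
      lt_of_lt_of_le (by norm_num) h1
    obtain ⟨k₀, hk₀⟩ := lt_iSup_iff.mp hhalf
    -- the key bound for every K
    have hKbound : ∀ K : ℕ, (ε / 4) * K ≤ (k₀ : ℝ) + 2 + c := by
      intro K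
      set L : ℕ := max 1 ⌈(ε / 4) * K + k₀⌉₊ with hLdef
      have hL1 : 1 ≤ L := le_max_left _ _
      have hLlb : (ε / 4) * K + k₀ ≤ (L : ℝ) := by
        refine le_trans (Nat.le_ceil _) ?_
        exact_mod_cast le_max_right 1 ⌈(ε / 4) * K + k₀⌉₊
      have hLub : (L : ℝ) ≤ (ε / 4) * K + k₀ + 2 := by
        have hceil : (⌈(ε / 4) * K + k₀⌉₊ : ℝ) < (ε / 4) * K + k₀ + 1 :=
          Nat.ceil_lt_add_one (by positivity)
        have hmax : L ≤ ⌈(ε / 4) * K + k₀⌉₊ + 1 :=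
          max_le (Nat.succ_le_succ (Nat.zero_le _)) (Nat.le_succ _)
        have : (L : ℝ) ≤ (⌈(ε / 4) * K + k₀⌉₊ : ℝ) + 1 := by exact_mod_cast hmax
        linarith
      obtain ⟨hfin, hineq⟩ := hball L hL1
      -- lower bound the tsum
      have hAn : ∀ n ∈ Finset.range (K + 1),
          (1 : ℝ≥0∞) / 2 ≤ ann {w : Traj d | ∀ m ≤ n, dotl (w m) ℓ ≤ (L : ℝ)} := by
        intro n hn
        refine le_trans hk₀.le (measure_mono ?_)
        intro w hw m hm
        have h1 := hw m
        have hmK : (m : ℝ) ≤ (K : ℝ) := by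
          have : m ≤ K := le_trans hm (Nat.lt_succ_iff.mp (Finset.mem_range.mp hn))
          exact_mod_cast this
        have h2 : (ε / 4) * m ≤ (ε / 4) * K :=
          mul_le_mul_of_nonneg_left hmK (le_of_lt hδ)
        linarith
      have hsum : ((K + 1 : ℕ) : ℝ≥0∞) * ((1 : ℝ≥0∞) / 2) ≤
          ∑' n : ℕ, ann {w : Traj d | ∀ m ≤ n, dotl (w m) ℓ ≤ (L : ℝ)} := by
        calc ((K + 1 : ℕ) : ℝ≥0∞) * ((1 : ℝ≥0∞) / 2)
            = (Finset.range (K + 1)).card • ((1 : ℝ≥0∞) / 2) := by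
              simp [nsmul_eq_mul]
          _ ≤ ∑ n ∈ Finset.range (K + 1),
              ann {w : Traj d | ∀ m ≤ n, dotl (w m) ℓ ≤ (L : ℝ)} :=
              Finset.card_nsmul_le_sum _ _ _ hAn
          _ ≤ _ := ENNReal.sum_le_tsum _
      have htr : ((K : ℝ) + 1) / 2 ≤
          (∑' n : ℕ, ann {w : Traj d | ∀ m ≤ n, dotl (w m) ℓ ≤ (L : ℝ)}).toReal := by
        have h2 := ENNReal.toReal_mono hfin hsum
        rw [ENNReal.toReal_mul] at h2
        simp at h2
        rw [ENNReal.toReal_add (by simp) (by simp)] at h2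
        simpa [div_eq_mul_inv] using h2
      have hchain : ε * (((K : ℝ) + 1) / 2) ≤ (L : ℝ) + c := by
        calc ε * (((K : ℝ) + 1) / 2)
            ≤ ε * (∑' n : ℕ, ann {w : Traj d | ∀ m ≤ n,
                dotl (w m) ℓ ≤ (L : ℝ)}).toReal :=
              mul_le_mul_of_nonneg_left htr (le_of_lt hε)
          _ ≤ ∫ w, dotl (w (exitSlab ℓ (L : ℝ) w)) ℓ ∂ann := hineq
          _ ≤ (L : ℝ) + c := hub L hL1
      nlinarith
    obtain ⟨K, hK⟩ := exists_nat_gt (((k₀ : ℝ) + 2 + c) / (ε / 4))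
    have h1 := hKbound K
    have h2 := (div_lt_iff₀ hδ).mp hK
    nlinarith
  refine ⟨?_, hpos⟩
  rintro rfl
  simp at hpos
end
end
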